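/- Let F be a finite signature, ≿ a precedence on F, and A a simple monotone well-founded ordered F-algebra. Then the weighted path order >_wpo induced by A and ≿ has the subterm property: s >_wpo t whenever t is a proper subterm of s. Consequently >_wpo is a simplification order. -/

import Mathlib

/-- First-order terms over a signature `F` with arity function `ar` and variables `V`. -/
inductive Term (F : Type) (ar : F → ℕ) (V : Type) : Type where
  | var : V → Term F ar V
  | app : (f : F) → (Fin (ar f) → Term F ar V) → Term F ar V

namespace Term

variable {F V : Type} {ar : F → ℕ}

/-- Application of a substitution `σ : V → Term F ar V` to a term. -/
def subst (σ : V → Term F ar V) : Term F ar V → Term F ar V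
  | var v => σ v
  | app f args => app f (fun i => (args i).subst σ)

/-- Interpretation of a term in an `F`-algebra with carrier `A` under assignment `α`. -/
def eval {A : Type} (I : (f : F) → (Fin (ar f) → A) → A) (α : V → A) :
    Term F ar V → A
  | var v => α v
  | app f args => I f (fun i => (args i).eval I α)

/-- A term is a non-variable term (function application). -/
def IsApp : Term F ar V → Prop
  | var _ => False
  | app _ _ => True

end Term

section Algebra

variable {F V A : Type}

/-- `RC lt a b` : reflexive closure of the strict order `lt`, i.e. `a ≤ b`. -/
def RC (lt : A → A → Prop) (a b : A) : Prop := lt a b ∨ a = b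

variable (ar : F → ℕ) (I : (f : F) → (Fin (ar f) → A) → A) (lt : A → A → Prop)

/-- `s >_A t` : `[α](t) < [α](s)` for every assignment `α`. -/
def GTA (s t : Term F ar V) : Prop := ∀ α : V → A, lt (t.eval I α) (s.eval I α)

/-- `s ≥_A t` : `[α](t) ≤ [α](s)` for every assignment `α`. -/
def GEA (s t : Term F ar V) : Prop := ∀ α : V → A, RC lt (t.eval I α) (s.eval I α)

/-- The algebra is simple: `f_A(a_1, …, a_n) ≥ a_i`. -/
def Simple : Prop := ∀ (f : F) (as : Fin (ar f) → A) (i : Fin (ar f)), RC lt (as i) (I f as)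

/-- The algebra is weakly monotone: `a_i > b` implies
`f_A(a_1,…,a_i,…,a_n) ≥ f_A(a_1,…,b,…,a_n)`. -/
def WeaklyMonotone : Prop :=
  ∀ (f : F) (as : Fin (ar f) → A) (i : Fin (ar f)) (b : A),
    lt b (as i) → RC lt (I f (Function.update as i b)) (I f as)

end Algebra

section WPO

variable {F V A : Type} (ar : F → ℕ) (I : (f : F) → (Fin (ar f) → A) → A)
  (lt : A → A → Prop) (prec : F → F → Prop)

mutual
  /-- The weighted path order induced by the algebra `(A, I, lt)` and the precedence `prec`. -/
  inductive WPO : Term F ar V → Term F ar V → Prop where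
    /-- (1) `s >_A t`. -/
    | alg {s t} : GTA ar I lt s t → WPO s t
    /-- (2a) `s ≥_A t` and `s_i >_wpo t`. -/
    | sub {f ss t} (i : Fin (ar f)) :
        GEA ar I lt (Term.app f ss) t → WPO (ss i) t → WPO (Term.app f ss) t
    /-- (2a) `s ≥_A t` and `s_i = t`. -/
    | subEq {f ss t} (i : Fin (ar f)) :
        GEA ar I lt (Term.app f ss) t → ss i = t → WPO (Term.app f ss) t
    /-- (2b-i) `s ≥_A t`, `s >_wpo t_j` for all `j`, and `f ≻ g`. -/
    | prc {f ss g ts} :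
        GEA ar I lt (Term.app f ss) (Term.app g ts) →
        (∀ j, WPO (Term.app f ss) (ts j)) →
        prec f g → ¬ prec g f → WPO (Term.app f ss) (Term.app g ts)
    /-- (2b-ii) `s ≥_A t`, `s >_wpo t_j` for all `j`, `f ≿ g` and lex comparison of arguments. -/
    | lex {f ss g ts} :
        GEA ar I lt (Term.app f ss) (Term.app g ts) →
        (∀ j, WPO (Term.app f ss) (ts j)) →
        prec f g → WPOLex (List.ofFn ss) (List.ofFn ts) →
        WPO (Term.app f ss) (Term.app g ts)

  /-- Lexicographic extension of `WPO` to argument lists (of possibly different lengths). -/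
  inductive WPOLex : List (Term F ar V) → List (Term F ar V) → Prop where
    | head {s t l₁ l₂} : WPO s t → WPOLex (s :: l₁) (t :: l₂)
    | tail {s l₁ l₂} : WPOLex l₁ l₂ → WPOLex (s :: l₁) (s :: l₂)
    | longer {s l₁} : WPOLex (s :: l₁) []
end

end WPO

section SPO

variable {F V : Type} {ar : F → ℕ} (qge qgt : Term F ar V → Term F ar V → Prop)

mutual
  /-- The semantic path order induced by the order pair `(qge, qgt)` (`⊒∼`, `⊐`). -/
  inductive SPO : Term F ar V → Term F ar V → Prop where
    /-- (1) `s_i >_spo t`. -/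
    | sub {f ss t} (i : Fin (ar f)) : SPO (ss i) t → SPO (Term.app f ss) t
    /-- (1) `s_i = t`. -/
    | subEq {f ss t} (i : Fin (ar f)) : ss i = t → SPO (Term.app f ss) t
    /-- (2a) `s >_spo t_j` for all `j` and `s ⊐ t`. -/
    | gt {f ss g ts} : (∀ j, SPO (Term.app f ss) (ts j)) →
        qgt (Term.app f ss) (Term.app g ts) → SPO (Term.app f ss) (Term.app g ts)
    /-- (2b) `s >_spo t_j` for all `j`, `s ⊒∼ t` and lex comparison of arguments. -/
    | lex {f ss g ts} : (∀ j, SPO (Term.app f ss) (ts j)) →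
        qge (Term.app f ss) (Term.app g ts) →
        SPOLex (List.ofFn ss) (List.ofFn ts) → SPO (Term.app f ss) (Term.app g ts)

  /-- Lexicographic extension of `SPO` to argument lists. -/
  inductive SPOLex : List (Term F ar V) → List (Term F ar V) → Prop where
    | head {s t l₁ l₂} : SPO s t → SPOLex (s :: l₁) (t :: l₂)
    | tail {s l₁ l₂} : SPOLex l₁ l₂ → SPOLex (s :: l₁) (s :: l₂)
    | longer {s l₁} : SPOLex (s :: l₁) []
end

end SPO

section Props

variable {F V : Type} {ar : F → ℕ}

/-- Closure under contexts: replacing one argument. -/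
def ClosedCtx (R : Term F ar V → Term F ar V → Prop) : Prop :=
  ∀ (f : F) (args : Fin (ar f) → Term F ar V) (i : Fin (ar f)) (s t : Term F ar V),
    R s t → R (Term.app f (Function.update args i s)) (Term.app f (Function.update args i t))

/-- Closure under substitutions. -/
def ClosedSubst (R : Term F ar V → Term F ar V → Prop) : Prop :=
  ∀ (σ : V → Term F ar V) (s t : Term F ar V), R s t → R (s.subst σ) (t.subst σ)

/-- A reduction order: a well-founded strict order closed under contexts and substitutions. -/
def ReductionOrder (R : Term F ar V → Term F ar V → Prop) : Prop :=
  (∀ s, ¬ R s s) ∧ Transitive R ∧ WellFounded (fun s t => R t s) ∧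
    ClosedCtx R ∧ ClosedSubst R

/-- `Subterm t s` : `t` is a subterm of `s`. -/
inductive Subterm : Term F ar V → Term F ar V → Prop where
  | refl {t} : Subterm t t
  | arg {t f ss} (i : Fin (ar f)) : Subterm t (ss i) → Subterm t (Term.app f ss)

/-- `ProperSubterm t s` : `t` is a proper subterm of `s`. -/
def ProperSubterm (t s : Term F ar V) : Prop :=
  ∃ (f : F) (ss : Fin (ar f) → Term F ar V) (i : Fin (ar f)),
    s = Term.app f ss ∧ Subterm t (ss i)

/-- The rewrite relation of a TRS `R`: closure of the rules under substitutions and contexts. -/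
inductive Rewrite (R : Set (Term F ar V × Term F ar V)) : Term F ar V → Term F ar V → Prop where
  | rule {l r} (σ : V → Term F ar V) : (l, r) ∈ R → Rewrite R (l.subst σ) (r.subst σ)
  | ctx {s t} (f : F) (args : Fin (ar f) → Term F ar V) (i : Fin (ar f)) :
      Rewrite R s t →
      Rewrite R (Term.app f (Function.update args i s)) (Term.app f (Function.update args i t))

end Props

section Pair

variable {F V A : Type} (ar : F → ℕ) (I : (f : F) → (Fin (ar f) → A) → A)
  (lt : A → A → Prop) (prec : F → F → Prop)

/-- `s ⊒∼ t` : both non-variable, and `s >_A t`, or `s ≥_A t` and `root(s) ≿ root(t)`. -/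
def QGE (s t : Term F ar V) : Prop :=
  ∃ (f : F) (ss : Fin (ar f) → Term F ar V) (g : F) (ts : Fin (ar g) → Term F ar V),
    s = Term.app f ss ∧ t = Term.app g ts ∧
      (GTA ar I lt s t ∨ (GEA ar I lt s t ∧ prec f g))

/-- `s ⊐ t` : both non-variable, and `s >_A t`, or `s ≥_A t` and `root(s) ≻ root(t)`. -/
def QGT (s t : Term F ar V) : Prop :=
  ∃ (f : F) (ss : Fin (ar f) → Term F ar V) (g : F) (ts : Fin (ar g) → Term F ar V),
    s = Term.app f ss ∧ t = Term.app g ts ∧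
      (GTA ar I lt s t ∨ (GEA ar I lt s t ∧ prec f g ∧ ¬ prec g f))

variable (Im : (f : F) → (Fin (ar f) → A) → A)

/-- Interpretation of the marked term `t♯` (root symbol interpreted by `Im`). -/
def evalSharp (α : V → A) : Term F ar V → A
  | .var v => α v
  | .app f ts => Im f (fun i => (ts i).eval I α)

/-- `s♯ >_A t♯`. -/
def GTAS (s t : Term F ar V) : Prop :=
  ∀ α : V → A, lt (evalSharp ar I Im α t) (evalSharp ar I Im α s)

/-- `s♯ ≥_A t♯`. -/
def GEAS (s t : Term F ar V) : Prop :=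
  ∀ α : V → A, RC lt (evalSharp ar I Im α t) (evalSharp ar I Im α s)

/-- Marked version of `⊒∼` : `s♯ >_A t♯`, or `s♯ ≥_A t♯` and `root(s) ≿ root(t)`. -/
def QGES (s t : Term F ar V) : Prop :=
  ∃ (f : F) (ss : Fin (ar f) → Term F ar V) (g : F) (ts : Fin (ar g) → Term F ar V),
    s = Term.app f ss ∧ t = Term.app g ts ∧
      (GTAS ar I lt Im s t ∨ (GEAS ar I lt Im s t ∧ prec f g))

/-- Marked version of `⊐` : `s♯ >_A t♯`, or `s♯ ≥_A t♯` and `root(s) ≻ root(t)`. -/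
def QGTS (s t : Term F ar V) : Prop :=
  ∃ (f : F) (ss : Fin (ar f) → Term F ar V) (g : F) (ts : Fin (ar g) → Term F ar V),
    s = Term.app f ss ∧ t = Term.app g ts ∧
      (GTAS ar I lt Im s t ∨ (GEAS ar I lt Im s t ∧ prec f g ∧ ¬ prec g f))

/-- The generalized weighted path order: `s ≥_A t` and `s >_spo t` for the SPO induced
from the marked order pair. -/
def GWPO (s t : Term F ar V) : Prop :=
  GEA ar I lt s t ∧ SPO (QGES ar I lt prec Im) (QGTS ar I lt prec Im) s t

end Pair

section AuxWPO

variable {F V A : Type} {ar : F → ℕ} {I : (f : F) → (Fin (ar f) → A) → A}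
  {lt : A → A → Prop} {prec : F → F → Prop}

/-- Size of a term. -/
def tsize : Term F ar V → ℕ
  | .var _ => 1
  | .app _ ts => 1 + Finset.univ.sum (fun i => tsize (ts i))

lemma tsize_pos (t : Term F ar V) : 1 ≤ tsize t := by
  cases t <;> simp [tsize]

lemma tsize_lt {f : F} (ss : Fin (ar f) → Term F ar V) (i : Fin (ar f)) :
    tsize (ss i) < tsize (Term.app f ss) := by
  have h : tsize (ss i) ≤ Finset.univ.sum (fun j => tsize (ss j)) :=
    Finset.single_le_sum (f := fun j => tsize (ss j)) (fun _ _ => Nat.zero_le _)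
      (Finset.mem_univ i)
  simp only [tsize]; omega

/-- Total size of a list of terms. -/
def sizeL (l : List (Term F ar V)) : ℕ := (l.map tsize).sum

lemma sizeL_cons (a : Term F ar V) (l : List (Term F ar V)) :
    sizeL (a :: l) = tsize a + sizeL l := by simp [sizeL]

lemma sizeL_ofFn {f : F} (ss : Fin (ar f) → Term F ar V) :
    sizeL (List.ofFn ss) < tsize (Term.app f ss) := by
  simp only [sizeL, List.map_ofFn, List.sum_ofFn, tsize, Function.comp]
  omega

lemma tsize_le_of_subterm {s t : Term F ar V} (h : Subterm t s) : tsize t ≤ tsize s := by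
  induction h with
  | refl => exact le_rfl
  | arg i _ ih => exact le_trans ih (le_of_lt (tsize_lt _ i))

section RCBasic
variable (ltt : Transitive lt)
include ltt

lemma rc_trans {a b c : A} (h1 : RC lt a b) (h2 : RC lt b c) : RC lt a c := by
  rcases h1 with h1 | rfl
  · rcases h2 with h2 | rfl
    · exact Or.inl (ltt h1 h2)
    · exact Or.inl h1
  · exact h2

lemma rc_lt {a b c : A} (h1 : RC lt a b) (h2 : lt b c) : lt a c := by
  rcases h1 with h1 | rfl
  · exact ltt h1 h2
  · exact h2

lemma lt_rc {a b c : A} (h1 : lt a b) (h2 : RC lt b c) : lt a c := by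
  rcases h2 with h2 | rfl
  · exact ltt h1 h2
  · exact h1

end RCBasic

lemma gea_refl (s : Term F ar V) : GEA ar I lt s s := fun _ => Or.inr rfl

lemma gea_of_gta {s t : Term F ar V} (h : GTA ar I lt s t) : GEA ar I lt s t :=
  fun α => Or.inl (h α)

section Comp
variable (ltt : Transitive lt)
include ltt

lemma gea_trans {s t u : Term F ar V} (h1 : GEA ar I lt s t) (h2 : GEA ar I lt t u) :
    GEA ar I lt s u := fun α => rc_trans ltt (h2 α) (h1 α)

lemma gta_gea {s t u : Term F ar V} (h1 : GTA ar I lt s t) (h2 : GEA ar I lt t u) :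
    GTA ar I lt s u := fun α => rc_lt ltt (h2 α) (h1 α)

lemma gea_gta {s t u : Term F ar V} (h1 : GEA ar I lt s t) (h2 : GTA ar I lt t u) :
    GTA ar I lt s u := fun α => lt_rc ltt (h2 α) (h1 α)

lemma gea_subterm (hs : Simple ar I lt) {s t : Term F ar V} (h : Subterm t s) :
    GEA ar I lt s t := by
  induction h with
  | refl => exact gea_refl _
  | arg i hsub ih =>
    rename_i f ss
    refine gea_trans ltt ?_ ih
    intro α
    simp only [Term.eval]
    exact hs f (fun j => Term.eval I α (ss j)) i

end Comp

lemma gea_of_wpo {s t : Term F ar V} (h : WPO ar I lt prec s t) : GEA ar I lt s t := by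
  cases h with
  | alg h => exact gea_of_gta h
  | sub i hge _ => exact hge
  | subEq i hge _ => exact hge
  | prc hge _ _ _ => exact hge
  | lex hge _ _ _ => exact hge

section Subterm
variable (ltt : Transitive lt) (hs : Simple ar I lt)
include ltt hs

lemma wpo_of_subterm {s t : Term F ar V} (h : Subterm t s) :
    t = s ∨ WPO ar I lt prec s t := by
  induction h with
  | refl => exact Or.inl rfl
  | arg i hsub ih =>
    right
    have hge : GEA ar I lt (Term.app _ _) t :=
      gea_subterm ltt hs (Subterm.arg i hsub)
    rcases ih with rfl | hw
    · exact WPO.subEq i hge rfl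
    · exact WPO.sub i hge hw

lemma wpo_proper {f : F} {ss : Fin (ar f) → Term F ar V} {t : Term F ar V}
    (i : Fin (ar f)) (h : Subterm t (ss i)) : WPO ar I lt prec (Term.app f ss) t := by
  rcases wpo_of_subterm (prec := prec) ltt hs (Subterm.arg i h) with he | hw
  · exfalso
    have h1 : tsize t ≤ tsize (ss i) := tsize_le_of_subterm h
    have h2 : tsize (ss i) < tsize (Term.app f ss) := tsize_lt _ i
    rw [he] at h1
    omega
  · exact hw

end Subterm

section Trans
variable (ltt : Transitive lt)
  (prec_trans : ∀ f g h : F, prec f g → prec g h → prec f h)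
include ltt prec_trans

lemma wpo_trans_aux : ∀ n : ℕ,
    (∀ s t u : Term F ar V, tsize s + tsize t + tsize u ≤ n →
      WPO ar I lt prec s t → WPO ar I lt prec t u → WPO ar I lt prec s u) ∧
    (∀ l1 l2 l3 : List (Term F ar V), sizeL l1 + sizeL l2 + sizeL l3 ≤ n →
      WPOLex ar I lt prec l1 l2 → WPOLex ar I lt prec l2 l3 →
      WPOLex ar I lt prec l1 l3) := by
  intro n
  induction n using Nat.strong_induction_on with
  | _ n IH =>
  have P : ∀ s t u : Term F ar V, tsize s + tsize t + tsize u ≤ n →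
      WPO ar I lt prec s t → WPO ar I lt prec t u → WPO ar I lt prec s u := by
    intro s t u hn h1 h2
    cases h1 with
    | alg h => exact WPO.alg (gta_gea ltt h (gea_of_wpo h2))
    | sub i hge hw =>
      rename_i f ss
      have hsz := tsize_lt ss i
      exact WPO.sub i (gea_trans ltt hge (gea_of_wpo h2))
        ((IH (tsize (ss i) + tsize t + tsize u) (by omega)).1 _ _ _ le_rfl hw h2)
    | subEq i hge heq =>
      refine WPO.sub i (gea_trans ltt hge (gea_of_wpo h2)) ?_
      rw [heq]; exact h2
    | prc hge hargs hfg hgf =>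
      rename_i f ss g ts
      have h1' : WPO ar I lt prec (Term.app f ss) (Term.app g ts) :=
        WPO.prc hge hargs hfg hgf
      cases h2 with
      | alg h => exact WPO.alg (gea_gta ltt hge h)
      | sub j hge2 hw =>
        have hsz := tsize_lt ts j
        exact (IH (tsize (Term.app f ss) + tsize (ts j) + tsize u) (by omega)).1
          _ _ _ le_rfl (hargs j) hw
      | subEq j hge2 heq => rw [← heq]; exact hargs j
      | prc hge2 hargs2 hfg2 hgf2 =>
        rename_i h us
        refine WPO.prc (gea_trans ltt hge hge2) ?_ (prec_trans _ _ _ hfg hfg2) ?_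
        · intro k
          have hsz := tsize_lt us k
          exact (IH (tsize (Term.app f ss) + tsize (Term.app g ts) + tsize (us k))
            (by omega)).1 _ _ _ le_rfl h1' (hargs2 k)
        · intro hc; exact hgf2 (prec_trans _ _ _ hc hfg)
      | lex hge2 hargs2 hfg2 hlex2 =>
        rename_i h us
        refine WPO.prc (gea_trans ltt hge hge2) ?_ (prec_trans _ _ _ hfg hfg2) ?_
        · intro k
          have hsz := tsize_lt us k
          exact (IH (tsize (Term.app f ss) + tsize (Term.app g ts) + tsize (us k))
            (by omega)).1 _ _ _ le_rfl h1' (hargs2 k)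
        · intro hc; exact hgf (prec_trans _ _ _ hfg2 hc)
    | lex hge hargs hfg hlex =>
      rename_i f ss g ts
      have h1' : WPO ar I lt prec (Term.app f ss) (Term.app g ts) :=
        WPO.lex hge hargs hfg hlex
      cases h2 with
      | alg h => exact WPO.alg (gea_gta ltt hge h)
      | sub j hge2 hw =>
        have hsz := tsize_lt ts j
        exact (IH (tsize (Term.app f ss) + tsize (ts j) + tsize u) (by omega)).1
          _ _ _ le_rfl (hargs j) hw
      | subEq j hge2 heq => rw [← heq]; exact hargs j
      | prc hge2 hargs2 hfg2 hgf2 =>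
        rename_i h us
        refine WPO.prc (gea_trans ltt hge hge2) ?_ (prec_trans _ _ _ hfg hfg2) ?_
        · intro k
          have hsz := tsize_lt us k
          exact (IH (tsize (Term.app f ss) + tsize (Term.app g ts) + tsize (us k))
            (by omega)).1 _ _ _ le_rfl h1' (hargs2 k)
        · intro hc; exact hgf2 (prec_trans _ _ _ hc hfg)
      | lex hge2 hargs2 hfg2 hlex2 =>
        rename_i h us
        refine WPO.lex (gea_trans ltt hge hge2) ?_ (prec_trans _ _ _ hfg hfg2) ?_
        · intro k
          have hsz := tsize_lt us k
          exact (IH (tsize (Term.app f ss) + tsize (Term.app g ts) + tsize (us k))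
            (by omega)).1 _ _ _ le_rfl h1' (hargs2 k)
        · have hsz1 := sizeL_ofFn ss
          have hsz2 := sizeL_ofFn ts
          have hsz3 := sizeL_ofFn us
          exact (IH (sizeL (List.ofFn ss) + sizeL (List.ofFn ts) + sizeL (List.ofFn us))
            (by omega)).2 _ _ _ le_rfl hlex hlex2
  refine ⟨P, ?_⟩
  intro l1 l2 l3 hn h1 h2
  cases h1 with
  | head hw =>
    rename_i s t m1 m2
    cases h2 with
    | head hw2 =>
      rename_i u m3
      refine WPOLex.head (P s t u ?_ hw hw2)
      rw [sizeL_cons, sizeL_cons, sizeL_cons] at hn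
      omega
    | tail hlex2 => exact WPOLex.head hw
    | longer => exact WPOLex.longer
  | tail hlex1 =>
    rename_i x m1 m2
    cases h2 with
    | head hw2 => exact WPOLex.head hw2
    | tail hlex2 =>
      rename_i m3
      refine WPOLex.tail ((IH (sizeL m1 + sizeL m2 + sizeL m3) ?_).2 _ _ _ le_rfl hlex1 hlex2)
      rw [sizeL_cons, sizeL_cons, sizeL_cons] at hn
      have := tsize_pos x
      omega
    | longer => exact WPOLex.longer
  | longer => cases h2

lemma wpo_trans {s t u : Term F ar V} (h1 : WPO ar I lt prec s t)
    (h2 : WPO ar I lt prec t u) : WPO ar I lt prec s u :=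
  (wpo_trans_aux ltt prec_trans (tsize s + tsize t + tsize u)).1 _ _ _ le_rfl h1 h2

end Trans

section Subst

lemma eval_subst (σ : V → Term F ar V) (α : V → A) :
    ∀ t : Term F ar V, (t.subst σ).eval I α = t.eval I (fun v => (σ v).eval I α) := by
  intro t
  induction t with
  | var v => rfl
  | app f ts ih =>
    show I f _ = I f _
    exact congrArg _ (funext fun i => ih i)

lemma gta_subst (σ : V → Term F ar V) {s t : Term F ar V} (h : GTA ar I lt s t) :
    GTA ar I lt (s.subst σ) (t.subst σ) := by
  intro α
  rw [eval_subst, eval_subst]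
  exact h _

lemma gea_subst (σ : V → Term F ar V) {s t : Term F ar V} (h : GEA ar I lt s t) :
    GEA ar I lt (s.subst σ) (t.subst σ) := by
  intro α
  rw [eval_subst, eval_subst]
  exact h _

lemma wpo_subst_aux (σ : V → Term F ar V) : ∀ n : ℕ,
    (∀ s t : Term F ar V, tsize s + tsize t ≤ n →
      WPO ar I lt prec s t → WPO ar I lt prec (s.subst σ) (t.subst σ)) ∧
    (∀ l1 l2 : List (Term F ar V), sizeL l1 + sizeL l2 ≤ n →
      WPOLex ar I lt prec l1 l2 →
      WPOLex ar I lt prec (l1.map (Term.subst σ)) (l2.map (Term.subst σ))) := by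
  intro n
  induction n using Nat.strong_induction_on with
  | _ n IH =>
  have P : ∀ s t : Term F ar V, tsize s + tsize t ≤ n →
      WPO ar I lt prec s t → WPO ar I lt prec (s.subst σ) (t.subst σ) := by
    intro s t hn h
    cases h with
    | alg h => exact WPO.alg (gta_subst σ h)
    | sub i hge hw =>
      rename_i f ss
      have hsz := tsize_lt ss i
      exact WPO.sub i (gea_subst σ hge)
        ((IH (tsize (ss i) + tsize t) (by omega)).1 _ _ le_rfl hw)
    | subEq i hge heq =>
      exact WPO.subEq i (gea_subst σ hge) (by simpa using congrArg (Term.subst σ) heq)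
    | prc hge hargs hfg hgf =>
      rename_i f ss g ts
      refine WPO.prc (gea_subst σ hge) ?_ hfg hgf
      intro j
      have hsz := tsize_lt ts j
      exact (IH (tsize (Term.app f ss) + tsize (ts j)) (by omega)).1 _ _ le_rfl (hargs j)
    | lex hge hargs hfg hlex =>
      rename_i f ss g ts
      refine WPO.lex (gea_subst σ hge) ?_ hfg ?_
      · intro j
        have hsz := tsize_lt ts j
        exact (IH (tsize (Term.app f ss) + tsize (ts j)) (by omega)).1 _ _ le_rfl (hargs j)
      · have hsz1 := sizeL_ofFn ss
        have hsz2 := sizeL_ofFn ts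
        have := (IH (sizeL (List.ofFn ss) + sizeL (List.ofFn ts)) (by omega)).2
          _ _ le_rfl hlex
        simpa [List.map_ofFn, Function.comp_def] using this
  refine ⟨P, ?_⟩
  intro l1 l2 hn h
  cases h with
  | head hw =>
    rename_i s t m1 m2
    refine WPOLex.head (P s t ?_ hw)
    rw [sizeL_cons, sizeL_cons] at hn
    omega
  | tail hlex =>
    rename_i x m1 m2
    refine WPOLex.tail ((IH (sizeL m1 + sizeL m2) ?_).2 _ _ le_rfl hlex)
    rw [sizeL_cons, sizeL_cons] at hn
    have := tsize_pos x
    omega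
  | longer => exact WPOLex.longer

end Subst

section Ctx
variable (ltt : Transitive lt) (hs : Simple ar I lt) (hm : WeaklyMonotone ar I lt)
  (prec_refl : ∀ f : F, prec f f)

set_option linter.unusedSectionVars false

lemma eval_update {f : F} (args : Fin (ar f) → Term F ar V) (i : Fin (ar f))
    (s : Term F ar V) (α : V → A) :
    (fun j => ((Function.update args i s) j).eval I α) =
      Function.update (fun j => (args j).eval I α) i (s.eval I α) := by
  funext j
  by_cases h : j = i
  · subst h; simp
  · simp [Function.update_of_ne h]

include hm in
lemma gea_ctx {f : F} (args : Fin (ar f) → Term F ar V) (i : Fin (ar f))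
    {s t : Term F ar V} (h : GEA ar I lt s t) :
    GEA ar I lt (Term.app f (Function.update args i s))
      (Term.app f (Function.update args i t)) := by
  intro α
  show RC lt (I f _) (I f _)
  rw [eval_update, eval_update]
  rcases h α with hlt | heq
  · have := hm f (Function.update (fun j => (args j).eval I α) i (s.eval I α)) i
      (t.eval I α) (by rwa [Function.update_self])
    rwa [Function.update_idem] at this
  · rw [heq]
    exact Or.inr rfl

lemma wpolex_ofFn : ∀ {n : ℕ} (ss ts : Fin n → Term F ar V) (i : Fin n),
    (∀ j : Fin n, (j : ℕ) < (i : ℕ) → ss j = ts j) → WPO ar I lt prec (ss i) (ts i) →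
    WPOLex ar I lt prec (List.ofFn ss) (List.ofFn ts) := by
  intro n
  induction n with
  | zero => exact fun _ _ i => i.elim0
  | succ n ih =>
    intro ss ts i heq hw
    rw [List.ofFn_succ, List.ofFn_succ]
    cases i using Fin.cases with
    | zero => exact WPOLex.head hw
    | succ i' =>
      have h0 : ss 0 = ts 0 := heq 0 (by simp)
      rw [h0]
      refine WPOLex.tail (ih (fun j => ss j.succ) (fun j => ts j.succ) i' ?_ hw)
      intro j hj
      exact heq j.succ (by simpa using Nat.succ_lt_succ hj)

include ltt hs hm prec_refl in
lemma wpo_ctx {f : F} (args : Fin (ar f) → Term F ar V) (i : Fin (ar f))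
    {s t : Term F ar V} (h : WPO ar I lt prec s t) :
    WPO ar I lt prec (Term.app f (Function.update args i s))
      (Term.app f (Function.update args i t)) := by
  have hge := gea_of_wpo h
  refine WPO.lex (gea_ctx hm args i hge) ?_ (prec_refl f) ?_
  · intro j
    by_cases hj : j = i
    · subst hj
      rw [Function.update_self]
      have h1 : GEA ar I lt (Term.app f (Function.update args j s)) s :=
        gea_subterm ltt hs (Subterm.arg j (by rw [Function.update_self]; exact Subterm.refl))
      refine WPO.sub j (gea_trans ltt h1 hge) ?_
      rw [Function.update_self]
      exact h
    · rw [Function.update_of_ne hj]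
      exact wpo_proper ltt hs j (by rw [Function.update_of_ne hj]; exact Subterm.refl)
  · refine wpolex_ofFn _ _ i ?_ ?_
    · intro j hj
      have hne : j ≠ i := fun hc => by subst hc; omega
      rw [Function.update_of_ne hne, Function.update_of_ne hne]
    · rw [Function.update_self, Function.update_self]
      exact h

end Ctx

section Irrefl
variable [Nonempty A] (ltt : Transitive lt) (lt_irr : ∀ a : A, ¬ lt a a)
  (hs : Simple ar I lt) (prec_refl : ∀ f : F, prec f f)
  (prec_trans : ∀ f g h : F, prec f g → prec g h → prec f h)

set_option linter.unusedSectionVars false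

lemma wpolex_self : ∀ l : List (Term F ar V), WPOLex ar I lt prec l l →
    ∃ x ∈ l, WPO ar I lt prec x x := by
  intro l
  induction l with
  | nil => intro h; cases h
  | cons a l ih =>
    intro h
    cases h with
    | head hw => exact ⟨a, List.mem_cons_self, hw⟩
    | tail hl =>
      obtain ⟨x, hx, hw⟩ := ih hl
      exact ⟨x, List.mem_cons_of_mem _ hx, hw⟩

include ltt lt_irr hs prec_refl prec_trans in
lemma wpo_irrefl_aux : ∀ n : ℕ, ∀ s : Term F ar V, tsize s ≤ n →
    ¬ WPO ar I lt prec s s := by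
  intro n
  induction n using Nat.strong_induction_on with
  | _ n IH =>
  intro s hn h
  cases s with
  | var v =>
    cases h with
    | alg h => exact lt_irr _ (h (fun _ => Classical.arbitrary A))
  | app f ss =>
    cases h with
    | alg h => exact lt_irr _ (h (fun _ => Classical.arbitrary A))
    | sub i hge hw =>
      have hst : WPO ar I lt prec (Term.app f ss) (ss i) :=
        wpo_proper ltt hs i Subterm.refl
      have : WPO ar I lt prec (ss i) (ss i) := wpo_trans ltt prec_trans hw hst
      have hsz := tsize_lt ss i
      exact IH (tsize (ss i)) (by omega) _ le_rfl this
    | subEq i hge heq =>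
      have hsz := tsize_lt ss i
      rw [heq] at hsz
      omega
    | prc hge hargs hfg hgf => exact hgf (prec_refl f)
    | lex hge hargs hfg hlex =>
      obtain ⟨x, hx, hw⟩ := wpolex_self _ hlex
      obtain ⟨i, rfl⟩ := (List.mem_ofFn).mp hx
      have hsz := tsize_lt ss i
      exact IH (tsize (ss i)) (by omega) _ le_rfl hw

end Irrefl

end AuxWPO

/-- For a finite signature, a precedence, and a simple monotone
well-founded algebra, the weighted path order has the subterm property, and consequently
it is a simplification order (a rewrite order with the subterm property). -/
theorem wpo_is_simplification_order
    {F V A : Type} [Fintype F] [Countable V] [Infinite V] [Nonempty A]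
    (ar : F → ℕ) (I : (f : F) → (Fin (ar f) → A) → A) (lt : A → A → Prop)
    (lt_irrefl : ∀ a, ¬ lt a a) (lt_trans : Transitive lt)
    (lt_wf : WellFounded lt)
    (hsimple : Simple ar I lt) (hmono : WeaklyMonotone ar I lt)
    (prec : F → F → Prop) (prec_refl : ∀ f, prec f f)
    (prec_trans : ∀ f g h, prec f g → prec g h → prec f h) :
    -- subterm property
    (∀ s t : Term F ar V, ProperSubterm t s → WPO ar I lt prec s t) ∧
    -- simplification order: a strict rewrite order …
    (∀ s, ¬ WPO (V := V) ar I lt prec s s) ∧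
    Transitive (WPO (V := V) ar I lt prec) ∧
    ClosedCtx (WPO (V := V) ar I lt prec) ∧
    ClosedSubst (WPO (V := V) ar I lt prec) := by
  refine ⟨?_, ?_, ?_, ?_, ?_⟩
  · rintro s t ⟨f, ss, i, rfl, hsub⟩
    exact wpo_proper lt_trans hsimple i hsub
  · intro s
    exact wpo_irrefl_aux lt_trans lt_irrefl hsimple prec_refl prec_trans (tsize s) s le_rfl
  · intro s t u h1 h2
    exact wpo_trans lt_trans prec_trans h1 h2
  · intro f args i s t h
    exact wpo_ctx lt_trans hsimple hmono prec_refl args i h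
  · intro σ s t h
    exact (wpo_subst_aux σ (tsize s + tsize t)).1 _ _ le_rfl h
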